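/- For all nonnegative integers z₁ ≥ z₂ and z₃: if 2z₁ − z₂ < 3z₃ or z₁ + z₂ < 3z₃, then M(z₁,z₂,z₃) = 0. -/
import Mathlib


/-- The partition function `℘(a₁,a₂)`: the number of triples `(m₁,m₂,m₃) ∈ ℕ₀³` with
`a₁ = 3(m₁+m₂)` and `a₂ = m₃ − m₁ − 2m₂`. -/
noncomputable def wp (a₁ a₂ : ℤ) : ℕ :=
  Set.ncard {m : ℕ × ℕ × ℕ |
    a₁ = 3 * ((m.1 : ℤ) + (m.2.1 : ℤ)) ∧ a₂ = (m.2.2 : ℤ) - (m.1 : ℤ) - 2 * (m.2.1 : ℤ)}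

lemma wp_eq (n : ℕ) (b : ℤ) :
    wp (3 * (n : ℤ)) b = (n + 1) - (-b - n).toNat := by
  classical
  have hset : {m : ℕ × ℕ × ℕ |
      3 * (n : ℤ) = 3 * ((m.1 : ℤ) + (m.2.1 : ℤ)) ∧
      b = (m.2.2 : ℤ) - (m.1 : ℤ) - 2 * (m.2.1 : ℤ)} =
      ↑((Finset.Ico ((-b - n).toNat) (n + 1)).image
        (fun k => ((n - k : ℕ), k, (b + n + k).toNat))) := by
    ext m
    obtain ⟨m1, m2, m3⟩ := m
    simp only [Set.mem_setOf_eq, Finset.coe_image, Set.mem_image, Finset.mem_coe,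
      Finset.mem_Ico, Prod.mk.injEq]
    constructor
    · rintro ⟨h1, h2⟩
      exact ⟨m2, ⟨by omega, by omega⟩, by omega, rfl, by omega⟩
    · rintro ⟨k, ⟨hk1, hk2⟩, e1, rfl, e3⟩
      constructor <;> omega
  rw [wp, hset, Set.ncard_coe_finset,
    Finset.card_image_of_injective _ (fun a b h => by simpa using congrArg (fun p => p.2.1) h),
    Nat.card_Ico]

lemma wp_eq_zero (a b : ℤ) (ha : ¬ ∃ n : ℕ, a = 3 * (n : ℤ)) : wp a b = 0 := by
  rw [wp]
  convert Set.ncard_empty (ℕ × ℕ × ℕ) using 2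
  ext m
  simp only [Set.mem_setOf_eq, Set.mem_empty_iff_false, iff_false, not_and]
  intro h1 _
  exact ha ⟨m.1 + m.2.1, by push_cast; linarith⟩

/-- The branching multiplicity `m(z₁,z₂,z₃)` of the trivial `U•(2)`-representation in the
irreducible `SU(3)×SO(3)`-representation of highest weight `z₁λ₁+z₂λ₂+z₃μ₁`, expressed
as a seven-term alternating sum of partition function values. -/
noncomputable def branchM (z₁ z₂ z₃ : ℕ) : ℤ :=
  (wp ((z₁ : ℤ) + z₂) (-(z₃ : ℤ) - z₁ - 2) : ℤ)
  + (wp ((z₁ : ℤ) + z₂) ((z₃ : ℤ) - z₂) : ℤ)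
  - (wp ((z₁ : ℤ) + z₂) (-(z₃ : ℤ) - z₂ - 1) : ℤ)
  - (wp ((z₁ : ℤ) + z₂) ((z₃ : ℤ) - z₁ - 1) : ℤ)
  + (wp ((z₁ : ℤ) - 2 * z₂ - 3) ((z₂ : ℤ) + 1 - z₃) : ℤ)
  + (wp ((z₁ : ℤ) - 2 * z₂ - 3) ((z₂ : ℤ) - z₁ + z₃) : ℤ)
  - (wp ((z₁ : ℤ) - 2 * z₂ - 3) ((z₂ : ℤ) + 2 + z₃) : ℤ)

/-- **Vanishing of the branching multiplicity below the `z₃`-cone.**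
For all nonnegative integers `z₁ ≥ z₂` and `z₃`: if `2z₁ − z₂ < 3z₃` or `z₁ + z₂ < 3z₃`,
then `m(z₁,z₂,z₃) = 0`. -/
theorem branchM_vanishes (z₁ z₂ z₃ : ℕ) (hz : z₂ ≤ z₁)
    (h : 2 * (z₁ : ℤ) - z₂ < 3 * z₃ ∨ (z₁ : ℤ) + z₂ < 3 * z₃) :
    branchM z₁ z₂ z₃ = 0 := by
  by_cases hd : ∃ n : ℕ, (z₁ : ℤ) + z₂ = 3 * (n : ℤ)
  · obtain ⟨n, hn⟩ := hd
    by_cases hd' : ∃ n' : ℕ, (z₁ : ℤ) - 2 * z₂ - 3 = 3 * (n' : ℤ)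
    · obtain ⟨n', hn'⟩ := hd'
      simp only [branchM, hn, hn', wp_eq]
      omega
    · have hneg : (z₁ : ℤ) - 2 * z₂ - 3 < 0 := by
        by_contra h'
        push_neg at h'
        exact hd' ⟨n - z₂ - 1, by omega⟩
      simp only [branchM, hn, wp_eq, wp_eq_zero _ _ hd']
      omega
  · have hd' : ¬ ∃ n' : ℕ, (z₁ : ℤ) - 2 * z₂ - 3 = 3 * (n' : ℤ) := by
      rintro ⟨n', hn'⟩
      exact hd ⟨n' + z₂ + 1, by push_cast; linarith⟩
    simp only [branchM, wp_eq_zero _ _ hd, wp_eq_zero _ _ hd']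
    simp
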